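/- Let $E$ be a real normed vector space, $n \in \mathbb{N}$, and $G, D \ge 0$, $\kappa \ge 0$, $h, \gamma > 0$ with $h\gamma \le 1$, and $H, m \in \mathbb{N}$. For each $j < n$ let $c_j : E \to E \to \mathbb{R}$ satisfy, for all $p, q, v, w$ with $\|p\|, \|q\|, \|v\|, \|w\| \le D$: $|c_j(p, v) - c_j(q, v)| \le GD\|p - q\|$ and $|c_j(p, v) - c_j(p, w)| \le GD\|v - w\|$. Let $x_j, y_j, u_j, v_j \in E$ for $j < n$ satisfy $\|x_j\|, \|y_j\|, \|u_j\|, \|v_j\| \le D$ and $\|x_j - y_j\| + \|u_j - v_j\| \le \kappa^2(1+\kappa)(1-h\gamma)^{Hm+1} D$. Then $\Big| \sum_{j=0}^{n-1} c_j(x_j, u_j) - \sum_{j=0}^{n-1} c_j(y_j, v_j) \Big| \le n\, G D^2 \kappa^2 (1+\kappa) (1-h\gamma)^{Hm+1}$. -/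

import Mathlib

/-- Bound on `R₁`, the difference between the actual cumulative cost along
`(x_j, u_j)` and the idealized cumulative cost along `(y_j, v_j)`. -/
theorem stmt8 {E : Type*} [NormedAddCommGroup E] [NormedSpace ℝ E]
    (n : ℕ) (G D κ h γ : ℝ) (H m : ℕ)
    (hG : 0 ≤ G) (hD : 0 ≤ D) (hκ : 0 ≤ κ) (hh : 0 < h) (hγpos : 0 < γ) (hhγ : h * γ ≤ 1)
    (c : ℕ → E → E → ℝ)
    (hc1 : ∀ j < n, ∀ p q v : E, ‖p‖ ≤ D → ‖q‖ ≤ D → ‖v‖ ≤ D →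
      |c j p v - c j q v| ≤ G * D * ‖p - q‖)
    (hc2 : ∀ j < n, ∀ p v w : E, ‖p‖ ≤ D → ‖v‖ ≤ D → ‖w‖ ≤ D →
      |c j p v - c j p w| ≤ G * D * ‖v - w‖)
    (x y u v : ℕ → E)
    (hb : ∀ j < n, ‖x j‖ ≤ D ∧ ‖y j‖ ≤ D ∧ ‖u j‖ ≤ D ∧ ‖v j‖ ≤ D)
    (happ : ∀ j < n,
      ‖x j - y j‖ + ‖u j - v j‖ ≤ κ ^ 2 * (1 + κ) * (1 - h * γ) ^ (H * m + 1) * D) :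
    |∑ j ∈ Finset.range n, c j (x j) (u j) - ∑ j ∈ Finset.range n, c j (y j) (v j)| ≤
      n * G * D ^ 2 * κ ^ 2 * (1 + κ) * (1 - h * γ) ^ (H * m + 1) := by

  have key : ∀ j ∈ Finset.range n,
      |c j (x j) (u j) - c j (y j) (v j)| ≤
        G * D ^ 2 * κ ^ 2 * (1 + κ) * (1 - h * γ) ^ (H * m + 1) := by
    intro j hj
    rw [Finset.mem_range] at hj
    obtain ⟨hx, hy, hu, hv⟩ := hb j hj
    have h1 := hc1 j hj (x j) (y j) (u j) hx hy hu
    have h2 := hc2 j hj (y j) (u j) (v j) hy hu hv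
    have tri : |c j (x j) (u j) - c j (y j) (v j)| ≤
        |c j (x j) (u j) - c j (y j) (u j)| + |c j (y j) (u j) - c j (y j) (v j)| := by
      have := abs_sub_abs_le_abs_sub (c j (x j) (u j)) (c j (y j) (v j))
      calc |c j (x j) (u j) - c j (y j) (v j)|
          = |(c j (x j) (u j) - c j (y j) (u j)) + (c j (y j) (u j) - c j (y j) (v j))| := by
            ring_nf
        _ ≤ _ := abs_add_le _ _
    have hsum : |c j (x j) (u j) - c j (y j) (u j)| + |c j (y j) (u j) - c j (y j) (v j)| ≤
        G * D * (‖x j - y j‖ + ‖u j - v j‖) := by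
      rw [mul_add]; exact add_le_add h1 h2
    have happj := happ j hj
    have hGD : 0 ≤ G * D := mul_nonneg hG hD
    calc |c j (x j) (u j) - c j (y j) (v j)|
        ≤ G * D * (‖x j - y j‖ + ‖u j - v j‖) := tri.trans hsum
      _ ≤ G * D * (κ ^ 2 * (1 + κ) * (1 - h * γ) ^ (H * m + 1) * D) :=
          mul_le_mul_of_nonneg_left happj hGD
      _ = G * D ^ 2 * κ ^ 2 * (1 + κ) * (1 - h * γ) ^ (H * m + 1) := by ring
  calc |∑ j ∈ Finset.range n, c j (x j) (u j) - ∑ j ∈ Finset.range n, c j (y j) (v j)|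
      = |∑ j ∈ Finset.range n, (c j (x j) (u j) - c j (y j) (v j))| := by
        rw [Finset.sum_sub_distrib]
    _ ≤ ∑ j ∈ Finset.range n, |c j (x j) (u j) - c j (y j) (v j)| :=
        Finset.abs_sum_le_sum_abs _ _
    _ ≤ ∑ _j ∈ Finset.range n, G * D ^ 2 * κ ^ 2 * (1 + κ) * (1 - h * γ) ^ (H * m + 1) :=
        Finset.sum_le_sum key
    _ = n * G * D ^ 2 * κ ^ 2 * (1 + κ) * (1 - h * γ) ^ (H * m + 1) := by
        rw [Finset.sum_const, Finset.card_range, nsmul_eq_mul]; ring
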